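/- arXiv:2104.11285 — 5 statements merged into one kernel-verified Lean document; each statement's English description precedes it below -/
import Mathlib

section
/- Let σ_1,...,σ_m > 0, μ_1,...,μ_m ∈ ℝ^n, and t > 0. Then for every x ∈ ℝ^n, min_{u ∈ ℝ^n} min_{i∈{1,...,m}} { (1/(2σ_i²))‖u − μ_i‖² + (1/(2t))‖x − u‖² } = min_{i∈{1,...,m}} (1/(2(σ_i² + t)))‖x − μ_i‖². -/
open scoped BigOperators

lemma key_ineq {n : ℕ} (a b : ℝ) (ha : 0 < a) (hb : 0 < b)
    (x μ u : EuclideanSpace ℝ (Fin n)) :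
    a * b / (a + b) * ‖x - μ‖ ^ 2 ≤ a * ‖u - μ‖ ^ 2 + b * ‖x - u‖ ^ 2 := by
  have hxy : x - μ = (u - μ) + (x - u) := by abel
  rw [hxy]
  set v := u - μ
  set w := x - u
  have hps : ‖v + w‖ ^ 2 = ‖v‖ ^ 2 + 2 * inner ℝ v w + ‖w‖ ^ 2 := by
    exact norm_add_sq_real v w
  have hcs : (inner ℝ v w : ℝ) ≤ ‖v‖ * ‖w‖ := real_inner_le_norm v w
  have hab : 0 < a + b := by linarith
  rw [div_mul_eq_mul_div, div_le_iff₀ hab, hps]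
  nlinarith [sq_nonneg (a * ‖v‖ - b * ‖w‖), norm_nonneg v, norm_nonneg w,
    mul_pos ha hb, sq_nonneg (‖v‖ - ‖w‖)]

lemma key_eq {n : ℕ} (a b : ℝ) (ha : 0 < a) (hb : 0 < b)
    (x μ : EuclideanSpace ℝ (Fin n)) :
    a * ‖((a / (a + b)) • μ + (b / (a + b)) • x) - μ‖ ^ 2
      + b * ‖x - ((a / (a + b)) • μ + (b / (a + b)) • x)‖ ^ 2
      = a * b / (a + b) * ‖x - μ‖ ^ 2 := by
  have hab : (0:ℝ) < a + b := by linarith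
  have h1 : ((a / (a + b)) • μ + (b / (a + b)) • x) - μ = (b / (a + b)) • (x - μ) := by
    match_scalars <;> field_simp <;> ring
  have h2 : x - ((a / (a + b)) • μ + (b / (a + b)) • x) = (a / (a + b)) • (x - μ) := by
    match_scalars <;> field_simp <;> ring
  rw [h1, h2, norm_smul, norm_smul, mul_pow, mul_pow]
  have hb' : ‖b / (a + b)‖ = b / (a + b) := abs_of_pos (by positivity)
  have ha' : ‖a / (a + b)‖ = a / (a + b) := abs_of_pos (by positivity)
  rw [hb', ha']
  field_simp
  ring


/-- The value function of the regularized minimization problem with a minimum-of-quadratics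
regularizer: `min_u min_i {(1/(2σ_i²))‖u-μ_i‖² + (1/(2t))‖x-u‖²}
  = min_i (1/(2(σ_i²+t)))‖x-μ_i‖²`. -/
theorem stmt4 (n m : ℕ) (hm : 0 < m) (σ : Fin m → ℝ) (hσ : ∀ i, 0 < σ i)
    (μ : Fin m → EuclideanSpace ℝ (Fin n)) (t : ℝ) (ht : 0 < t)
    (x : EuclideanSpace ℝ (Fin n)) :
    (⨅ u : EuclideanSpace ℝ (Fin n),
        Finset.univ.inf' (Finset.univ_nonempty_iff.2 ⟨⟨0, hm⟩⟩)
          (fun i => (1 / (2 * (σ i) ^ 2)) * ‖u - μ i‖ ^ 2 + (1 / (2 * t)) * ‖x - u‖ ^ 2))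
      = Finset.univ.inf' (Finset.univ_nonempty_iff.2 ⟨⟨0, hm⟩⟩)
          (fun i => (1 / (2 * ((σ i) ^ 2 + t))) * ‖x - μ i‖ ^ 2) := by
  set a : Fin m → ℝ := fun i => 1 / (2 * (σ i) ^ 2) with ha_def
  set b : ℝ := 1 / (2 * t) with hb_def
  have ha : ∀ i, 0 < a i := fun i => by have := hσ i; positivity
  have hb : 0 < b := by positivity
  have hconst : ∀ i, a i * b / (a i + b) = 1 / (2 * ((σ i) ^ 2 + t)) := by
    intro i
    have h1 := hσ i
    have h2 : (σ i) ^ 2 > 0 := by positivity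
    rw [ha_def, hb_def]
    field_simp
    ring
  have hne := (Finset.univ_nonempty_iff (α := Fin m)).2 ⟨⟨0, hm⟩⟩
  have hbdd : BddBelow (Set.range fun u : EuclideanSpace ℝ (Fin n) =>
      Finset.univ.inf' hne
        (fun i => a i * ‖u - μ i‖ ^ 2 + b * ‖x - u‖ ^ 2)) := by
    refine ⟨0, ?_⟩
    rintro y ⟨u, rfl⟩
    apply Finset.le_inf'
    intro i _
    have := ha i
    positivity
  apply le_antisymm
  · apply Finset.le_inf'
    intro i _
    set ui : EuclideanSpace ℝ (Fin n) :=
      (a i / (a i + b)) • μ i + (b / (a i + b)) • x with hui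
    calc (⨅ u : EuclideanSpace ℝ (Fin n), Finset.univ.inf' hne
            (fun j => a j * ‖u - μ j‖ ^ 2 + b * ‖x - u‖ ^ 2))
        ≤ Finset.univ.inf' hne
            (fun j => a j * ‖ui - μ j‖ ^ 2 + b * ‖x - ui‖ ^ 2) := ciInf_le hbdd ui
      _ ≤ a i * ‖ui - μ i‖ ^ 2 + b * ‖x - ui‖ ^ 2 :=
            Finset.inf'_le _ (Finset.mem_univ i)
      _ = 1 / (2 * ((σ i) ^ 2 + t)) * ‖x - μ i‖ ^ 2 := by
            rw [hui, key_eq (a i) b (ha i) hb, hconst]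
  · apply le_ciInf
    intro u
    apply Finset.le_inf'
    intro i _
    calc Finset.univ.inf' hne (fun j => 1 / (2 * ((σ j) ^ 2 + t)) * ‖x - μ j‖ ^ 2)
        ≤ 1 / (2 * ((σ i) ^ 2 + t)) * ‖x - μ i‖ ^ 2 :=
          Finset.inf'_le _ (Finset.mem_univ i)
      _ = a i * b / (a i + b) * ‖x - μ i‖ ^ 2 := by rw [hconst]
      _ ≤ a i * ‖u - μ i‖ ^ 2 + b * ‖x - u‖ ^ 2 := key_ineq (a i) b (ha i) hb x (μ i) u
end

section
/- Let J ∈ Γ_0(ℝ^n) and define S(x,t) = min_{u∈ℝ^n}{J(u) + (1/(2t))‖x−u‖²} for x ∈ ℝ^n, t > 0. Then S is a classical solution of the Hamilton–Jacobi equation ∂S/∂t(x,t) + ½‖∇_x S(x,t)‖² = 0 for all x ∈ ℝ^n, t > 0. -/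
lemma normcombo {E : Type*} [NormedAddCommGroup E] [InnerProductSpace ℝ E]
    (v w : E) (a b : ℝ) (hab : a + b = 1) :
    ‖a • v + b • w‖ ^ 2 = a * ‖v‖ ^ 2 + b * ‖w‖ ^ 2 - a * b * ‖v - w‖ ^ 2 := by
  have h1 := norm_add_sq_real (a • v) (b • w)
  have h2 := norm_sub_sq_real v w
  have h3 : (inner ℝ (a • v) (b • w) : ℝ) = a * b * (inner ℝ v w : ℝ) := by
    rw [real_inner_smul_left, real_inner_smul_right]; ring
  have h4 : ‖a • v‖ ^ 2 = a ^ 2 * ‖v‖ ^ 2 := by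
    rw [norm_smul, mul_pow]; simp [sq_abs]
  have h5 : ‖b • w‖ ^ 2 = b ^ 2 * ‖w‖ ^ 2 := by
    rw [norm_smul, mul_pow]; simp [sq_abs]
  have hb : b = 1 - a := by linarith
  subst hb
  rw [h1, h3, h4, h5, h2]; ring

lemma normexpand {E : Type*} [NormedAddCommGroup E] [InnerProductSpace ℝ E]
    (y x p : E) :
    ‖y - p‖ ^ 2 = ‖y - x‖ ^ 2 + 2 * (inner ℝ (y - x) (x - p) : ℝ) + ‖x - p‖ ^ 2 := by
  have h1 := norm_add_sq_real (y - x) (x - p)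
  have h2 : y - x + (x - p) = y - p := by abel
  rw [h2] at h1; linarith

section
variable {n : ℕ} {J : EuclideanSpace ℝ (Fin n) → EReal}
  {S : EuclideanSpace ℝ (Fin n) → ℝ → ℝ}

lemma key1 (hnobot : ∀ u, J u ≠ ⊥)
    (hS : ∀ x : EuclideanSpace ℝ (Fin n), ∀ t : ℝ, 0 < t →
      ((S x t : ℝ) : EReal)
        = ⨅ u : EuclideanSpace ℝ (Fin n),
            (J u + (((1 / (2 * t)) * ‖x - u‖ ^ 2 : ℝ) : EReal)))
    (x : EuclideanSpace ℝ (Fin n)) {t : ℝ} (ht : 0 < t)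
    (u : EuclideanSpace ℝ (Fin n)) (hu : J u ≠ ⊤) :
    S x t ≤ (J u).toReal + 1 / (2 * t) * ‖x - u‖ ^ 2 := by
  have h := (hS x t ht) ▸ iInf_le
    (fun u : EuclideanSpace ℝ (Fin n) => J u + (((1 / (2 * t)) * ‖x - u‖ ^ 2 : ℝ) : EReal)) u
  rw [← EReal.coe_toReal hu (hnobot u), ← EReal.coe_add] at h
  exact_mod_cast h

lemma key2 (hnobot : ∀ u, J u ≠ ⊥)
    (hS : ∀ x : EuclideanSpace ℝ (Fin n), ∀ t : ℝ, 0 < t →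
      ((S x t : ℝ) : EReal)
        = ⨅ u : EuclideanSpace ℝ (Fin n),
            (J u + (((1 / (2 * t)) * ‖x - u‖ ^ 2 : ℝ) : EReal)))
    (x : EuclideanSpace ℝ (Fin n)) {t : ℝ} (ht : 0 < t)
    {ε : ℝ} (hε : 0 < ε) :
    ∃ u, J u ≠ ⊤ ∧ (J u).toReal + 1 / (2 * t) * ‖x - u‖ ^ 2 < S x t + ε := by
  have hlt : (⨅ u : EuclideanSpace ℝ (Fin n),
      (J u + (((1 / (2 * t)) * ‖x - u‖ ^ 2 : ℝ) : EReal))) < ((S x t + ε : ℝ) : EReal) := by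
    rw [← hS x t ht]
    exact_mod_cast (by linarith : S x t < S x t + ε)
  obtain ⟨u, hu⟩ := iInf_lt_iff.1 hlt
  have hune : J u ≠ ⊤ := by
    intro h; rw [h, EReal.top_add_of_ne_bot (EReal.coe_ne_bot _)] at hu
    exact (not_top_lt hu)
  refine ⟨u, hune, ?_⟩
  rw [← EReal.coe_toReal hune (hnobot u), ← EReal.coe_add] at hu
  exact_mod_cast hu

lemma Smono (hnobot : ∀ u, J u ≠ ⊥)
    (hS : ∀ x : EuclideanSpace ℝ (Fin n), ∀ t : ℝ, 0 < t →
      ((S x t : ℝ) : EReal)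
        = ⨅ u : EuclideanSpace ℝ (Fin n),
            (J u + (((1 / (2 * t)) * ‖x - u‖ ^ 2 : ℝ) : EReal)))
    (x : EuclideanSpace ℝ (Fin n)) {t₁ t₂ : ℝ} (ht₁ : 0 < t₁) (h12 : t₁ ≤ t₂) :
    S x t₂ ≤ S x t₁ := by
  have ht₂ : 0 < t₂ := lt_of_lt_of_le ht₁ h12
  have h : ((S x t₂ : ℝ) : EReal) ≤ ((S x t₁ : ℝ) : EReal) := by
    rw [hS x t₁ ht₁, hS x t₂ ht₂]
    refine iInf_mono fun u => add_le_add le_rfl ?_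
    have : (1 / (2 * t₂)) * ‖x - u‖ ^ 2 ≤ (1 / (2 * t₁)) * ‖x - u‖ ^ 2 := by
      apply mul_le_mul_of_nonneg_right _ (sq_nonneg _)
      apply one_div_le_one_div_of_le (by linarith) (by linarith)
    exact_mod_cast this
  exact_mod_cast h

lemma arith1 {t m ju jp jw X Y Z a : ℝ} (ht : 0 < t) (ha0 : 0 < a) (ha1 : a < 1)
    (heq : m = jp + 1 / (2 * t) * X)
    (hjw : jw ≤ a * ju + (1 - a) * jp)
    (hmw : m ≤ jw + 1 / (2 * t) * ((1 - a) * X + a * Y - (1 - a) * a * Z)) :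
    m + (1 - a) * (1 / (2 * t) * Z) ≤ ju + 1 / (2 * t) * Y := by
  have key : a * (m + (1 - a) * (1 / (2 * t) * Z)) ≤ a * (ju + 1 / (2 * t) * Y) := by
    have h6 : (1 - a) * m = (1 - a) * jp + (1 - a) * (1 / (2 * t) * X) := by
      rw [heq]; ring
    nlinarith [hmw, hjw, h6]
  exact le_of_mul_le_mul_left key ha0

lemma exists_prox
    (hconv : ∀ u v : EuclideanSpace ℝ (Fin n), ∀ a b : ℝ, 0 ≤ a → 0 ≤ b → a + b = 1 →
      J (a • u + b • v) ≤ (a : EReal) * J u + (b : EReal) * J v)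
    (hlsc : LowerSemicontinuous J)
    (hnobot : ∀ u, J u ≠ ⊥)
    (hS : ∀ x : EuclideanSpace ℝ (Fin n), ∀ t : ℝ, 0 < t →
      ((S x t : ℝ) : EReal)
        = ⨅ u : EuclideanSpace ℝ (Fin n),
            (J u + (((1 / (2 * t)) * ‖x - u‖ ^ 2 : ℝ) : EReal)))
    (x : EuclideanSpace ℝ (Fin n)) {t : ℝ} (ht : 0 < t) :
    ∃ p, J p ≠ ⊤ ∧ S x t = (J p).toReal + 1 / (2 * t) * ‖x - p‖ ^ 2 ∧
      ∀ u, J u ≠ ⊤ →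
        S x t + 1 / (2 * t) * ‖u - p‖ ^ 2 ≤ (J u).toReal + 1 / (2 * t) * ‖x - u‖ ^ 2 := by
  set m := S x t with hm
  set c : EuclideanSpace ℝ (Fin n) → ℝ := fun u => 1 / (2 * t) * ‖x - u‖ ^ 2 with hc
  set f : EuclideanSpace ℝ (Fin n) → EReal := fun u => J u + ((c u : ℝ) : EReal) with hf
  have h2t : (0 : ℝ) < 2 * t := by linarith
  have minor : ∀ u, J u ≠ ⊤ → S x (2 * t) ≤ (J u).toReal + 1 / (2 * (2 * t)) * ‖x - u‖ ^ 2 :=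
    fun u hu => key1 hnobot hS x (by linarith) u hu
  set B := 4 * t * (m + 1 - S x (2 * t)) with hB
  have hbound : ∀ u, J u ≠ ⊤ → (J u).toReal + c u ≤ m + 1 → ‖x - u‖ ^ 2 ≤ B := by
    intro u hu hle
    have h1 := minor u hu
    have hle' : (J u).toReal + 1 / (2 * t) * ‖x - u‖ ^ 2 ≤ m + 1 := hle
    have h3 : 1 / (2 * t) * ‖x - u‖ ^ 2
        = ‖x - u‖ ^ 2 / (4 * t) + 1 / (2 * (2 * t)) * ‖x - u‖ ^ 2 := by
      field_simp; ring
    have h4 : ‖x - u‖ ^ 2 / (4 * t) ≤ m + 1 - S x (2 * t) := by linarith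
    have h5 : ‖x - u‖ ^ 2 ≤ (m + 1 - S x (2 * t)) * (4 * t) :=
      (div_le_iff₀ (by linarith)).1 h4
    have hBeq : B = (m + 1 - S x (2 * t)) * (4 * t) := by rw [hB]; ring
    linarith
  set R := Real.sqrt (max B 0) with hR
  have hball : ∀ u, J u ≠ ⊤ → (J u).toReal + c u ≤ m + 1 → u ∈ Metric.closedBall x R := by
    intro u hu hle
    rw [Metric.mem_closedBall, dist_comm, dist_eq_norm]
    have h1 : ‖x - u‖ ^ 2 ≤ max B 0 := le_max_iff.2 (Or.inl (hbound u hu hle))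
    calc ‖x - u‖ = Real.sqrt (‖x - u‖ ^ 2) := by rw [Real.sqrt_sq (norm_nonneg _)]
    _ ≤ R := Real.sqrt_le_sqrt h1
  -- the nested compact sets
  set K : ℕ → Set (EuclideanSpace ℝ (Fin n)) := fun k =>
    Metric.closedBall x R ∩ f ⁻¹' Set.Iic ((m + 1 / (k + 1) : ℝ) : EReal) with hK
  have hfreal : ∀ u, J u ≠ ⊤ → f u = (((J u).toReal + c u : ℝ) : EReal) := by
    intro u hu
    show J u + ((c u : ℝ) : EReal) = _
    rw [EReal.coe_add, EReal.coe_toReal hu (hnobot u)]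
  have hKne : ∀ k : ℕ, (K k).Nonempty := by
    intro k
    have hk : (0 : ℝ) < 1 / (k + 1) := by positivity
    obtain ⟨u, hu, hult⟩ := key2 hnobot hS x ht hk
    have hcu : (J u).toReal + c u < m + 1 / (k + 1) := hult
    refine ⟨u, ⟨hball u hu (by
      have : (1 : ℝ) / (k + 1) ≤ 1 := by
        rw [div_le_one (by positivity)]; linarith [Nat.cast_nonneg (α := ℝ) k]
      linarith), ?_⟩⟩
    simp only [Set.mem_preimage, Set.mem_Iic]
    rw [hfreal u hu]
    exact_mod_cast le_of_lt hcu
  have hflsc : LowerSemicontinuous f := by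
    apply hlsc.add' (Continuous.lowerSemicontinuous ?_)
    · intro u
      exact EReal.continuousAt_add (Or.inr (EReal.coe_ne_bot _)) (Or.inl (hnobot u))
    · exact continuous_coe_real_ereal.comp
        (continuous_const.mul (((continuous_const.sub continuous_id).norm).pow 2))
  have hKcl : ∀ k, IsClosed (K k) :=
    fun k => Metric.isClosed_closedBall.inter (hflsc.isClosed_preimage _)
  have hKanti : ∀ k : ℕ, K (k + 1) ⊆ K k := by
    intro k
    apply Set.inter_subset_inter_right
    apply Set.preimage_mono
    apply Set.Iic_subset_Iic.2
    have : m + 1 / ((k : ℝ) + 1 + 1) ≤ m + 1 / (k + 1) := by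
      have : (1 : ℝ) / ((k : ℝ) + 1 + 1) ≤ 1 / (k + 1) :=
        one_div_le_one_div_of_le (by positivity) (by linarith)
      linarith
    exact_mod_cast this
  have hKcpt : IsCompact (K 0) :=
    (isCompact_closedBall x R).of_isClosed_subset (hKcl 0) Set.inter_subset_left
  obtain ⟨p, hp⟩ := IsCompact.nonempty_iInter_of_sequence_nonempty_isCompact_isClosed K
    hKanti hKne hKcpt hKcl
  have hpk : ∀ k : ℕ, f p ≤ ((m + 1 / (k + 1) : ℝ) : EReal) := by
    intro k
    have := (Set.mem_iInter.1 hp k).2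
    simpa using this
  have hpt : J p ≠ ⊤ := by
    intro h
    have h0 := hpk 0
    rw [hf] at h0; simp only [h] at h0
    rw [EReal.top_add_of_ne_bot (EReal.coe_ne_bot _)] at h0
    exact absurd h0 (not_le.2 (EReal.coe_lt_top _))
  have hpreal : ∀ k : ℕ, (J p).toReal + c p ≤ m + 1 / (k + 1) := by
    intro k
    have := hpk k
    rw [hfreal p hpt] at this
    exact_mod_cast this
  have hple : (J p).toReal + c p ≤ m := by
    refine ge_of_tendsto' (x := Filter.atTop) (f := fun k : ℕ => m + 1 / (k + 1)) ?_ hpreal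
    have := tendsto_one_div_add_atTop_nhds_zero_nat (𝕜 := ℝ)
    have h2 := Filter.Tendsto.const_add m this
    simpa using h2
  have hpge : m ≤ (J p).toReal + c p := key1 hnobot hS x ht p hpt
  have heq : m = (J p).toReal + 1 / (2 * t) * ‖x - p‖ ^ 2 := le_antisymm hpge hple
  refine ⟨p, hpt, heq, ?_⟩
  intro u hu
  -- strong convexity
  have main : ∀ a : ℝ, a ∈ Set.Ioo (0 : ℝ) 1 →
      m + (1 - a) * (1 / (2 * t) * ‖u - p‖ ^ 2)
        ≤ (J u).toReal + 1 / (2 * t) * ‖x - u‖ ^ 2 := by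
    rintro a ⟨ha0, ha1⟩
    have hb0 : (0:ℝ) ≤ 1 - a := by linarith
    have hab : a + (1 - a) = 1 := by ring
    have hJw_le : J (a • u + (1 - a) • p)
        ≤ ((a * (J u).toReal + (1 - a) * (J p).toReal : ℝ) : EReal) := by
      have h := hconv u p a (1 - a) (le_of_lt ha0) hb0 hab
      rw [← EReal.coe_toReal hu (hnobot u), ← EReal.coe_toReal hpt (hnobot p),
        ← EReal.coe_mul, ← EReal.coe_mul, ← EReal.coe_add] at h
      exact h
    have hJwt : J (a • u + (1 - a) • p) ≠ ⊤ := ne_top_of_le_ne_top (EReal.coe_ne_top _) hJw_le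
    have hjw : (J (a • u + (1 - a) • p)).toReal
        ≤ a * (J u).toReal + (1 - a) * (J p).toReal := by
      rw [← EReal.coe_toReal hJwt (hnobot _)] at hJw_le
      exact_mod_cast hJw_le
    have hmw := key1 hnobot hS x ht _ hJwt
    have hxw : x - (a • u + (1 - a) • p) = (1 - a) • (x - p) + a • (x - u) := by
      module
    have hcombo : ‖x - (a • u + (1 - a) • p)‖ ^ 2
        = (1 - a) * ‖x - p‖ ^ 2 + a * ‖x - u‖ ^ 2 - (1 - a) * a * ‖u - p‖ ^ 2 := by
      rw [hxw, normcombo (x - p) (x - u) (1 - a) a (by ring)]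
      have h2 : x - p - (x - u) = u - p := by abel
      rw [h2]
    rw [hcombo] at hmw
    exact arith1 ht ha0 ha1 heq hjw hmw
  have cont : Filter.Tendsto
      (fun a : ℝ => m + (1 - a) * (1 / (2 * t) * ‖u - p‖ ^ 2))
      (nhdsWithin 0 (Set.Ioi 0))
      (nhds (m + (1 - 0) * (1 / (2 * t) * ‖u - p‖ ^ 2))) := by
    apply Filter.Tendsto.mono_left _ nhdsWithin_le_nhds
    exact Continuous.tendsto
      (continuous_const.add ((continuous_const.sub continuous_id).mul continuous_const)) 0
  have ev : ∀ᶠ a in nhdsWithin (0:ℝ) (Set.Ioi 0),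
      m + (1 - a) * (1 / (2 * t) * ‖u - p‖ ^ 2)
        ≤ (J u).toReal + 1 / (2 * t) * ‖x - u‖ ^ 2 := by
    filter_upwards [Ioo_mem_nhdsGT_of_mem (Set.left_mem_Ico.mpr one_pos)]
      with a ha using main a ha
  have hfin := le_of_tendsto cont ev
  have : m + 1 / (2 * t) * ‖u - p‖ ^ 2 ≤ (J u).toReal + 1 / (2 * t) * ‖x - u‖ ^ 2 := by
    linarith [hfin]
  exact this
end

set_option maxHeartbeats 2000000 in
/-- The Moreau envelope `S(x,t) = min_u {J(u) + (1/(2t))‖x-u‖²}` of a proper convex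
lower semicontinuous `J` is a classical solution of the Hamilton–Jacobi equation
`∂S/∂t + ½‖∇ₓS‖² = 0` on `ℝⁿ × (0,∞)`. -/
theorem stmt6 (n : ℕ) (J : EuclideanSpace ℝ (Fin n) → EReal)
    (hconv : ∀ u v : EuclideanSpace ℝ (Fin n), ∀ a b : ℝ, 0 ≤ a → 0 ≤ b → a + b = 1 →
      J (a • u + b • v) ≤ (a : EReal) * J u + (b : EReal) * J v)
    (hlsc : LowerSemicontinuous J)
    (hproper : ∃ u, J u ≠ ⊤)
    (hnobot : ∀ u, J u ≠ ⊥)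
    (S : EuclideanSpace ℝ (Fin n) → ℝ → ℝ)
    (hS : ∀ x : EuclideanSpace ℝ (Fin n), ∀ t : ℝ, 0 < t →
      ((S x t : ℝ) : EReal)
        = ⨅ u : EuclideanSpace ℝ (Fin n),
            (J u + (((1 / (2 * t)) * ‖x - u‖ ^ 2 : ℝ) : EReal))) :
    ∀ x : EuclideanSpace ℝ (Fin n), ∀ t : ℝ, 0 < t →
      DifferentiableAt ℝ (fun y => S y t) x ∧
      HasDerivAt (fun s => S x s)
        (-((1 : ℝ) / 2 * ‖gradient (fun y => S y t) x‖ ^ 2)) t := by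

  intro x t ht
  classical
  have hex : ∀ s : ℝ, 0 < s → ∃ p, J p ≠ ⊤ ∧
      S x s = (J p).toReal + 1 / (2 * s) * ‖x - p‖ ^ 2 ∧
      ∀ u, J u ≠ ⊤ →
        S x s + 1 / (2 * s) * ‖u - p‖ ^ 2 ≤ (J u).toReal + 1 / (2 * s) * ‖x - u‖ ^ 2 :=
    fun s hs => exists_prox hconv hlsc hnobot hS x hs
  set P : ℝ → EuclideanSpace ℝ (Fin n) :=
    fun s => if hs : 0 < s then (hex s hs).choose else 0 with hPdef
  have hPspec : ∀ s : ℝ, ∀ hs : 0 < s, J (P s) ≠ ⊤ ∧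
      S x s = (J (P s)).toReal + 1 / (2 * s) * ‖x - P s‖ ^ 2 ∧
      ∀ u, J u ≠ ⊤ →
        S x s + 1 / (2 * s) * ‖u - P s‖ ^ 2 ≤ (J u).toReal + 1 / (2 * s) * ‖x - u‖ ^ 2 := by
    intro s hs
    have : P s = (hex s hs).choose := by rw [hPdef]; simp only [dif_pos hs]
    rw [this]
    exact (hex s hs).choose_spec
  clear_value P
  obtain ⟨hpt, hpeq, hpstr⟩ := hPspec t ht
  set p : EuclideanSpace ℝ (Fin n) := P t with hp
  set g : EuclideanSpace ℝ (Fin n) := (1/t) • (x - p) with hg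
  have htne : t ≠ 0 := ne_of_gt ht
  -- ===== gradient part =====
  have hgrad : HasGradientAt (fun y => S y t) g x := by
    rw [hasGradientAt_iff_hasFDerivAt, hasFDerivAt_iff_isLittleO_nhds_zero]
    rw [Asymptotics.isLittleO_iff]
    intro ε hε
    have hmem : Metric.ball (0 : EuclideanSpace ℝ (Fin n)) (2*t*ε) ∈ nhds (0 : EuclideanSpace ℝ (Fin n)) :=
      Metric.ball_mem_nhds _ (by positivity)
    filter_upwards [hmem] with h hmemh
    set y : EuclideanSpace ℝ (Fin n) := x + h with hy
    have hyx : y - x = h := by rw [hy]; abel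
    have hnh : ‖h‖ < 2*t*ε := by
      have := Metric.mem_ball.1 hmemh
      rwa [dist_zero_right] at this
    have hinner : ((InnerProductSpace.toDual ℝ (EuclideanSpace ℝ (Fin n)) g) h : ℝ)
        = 1/(2*t) * (2 * (inner ℝ (x - p) h : ℝ)) := by
      rw [InnerProductSpace.toDual_apply_apply, hg, real_inner_smul_left]; ring
    -- upper bound
    have hupper : S y t - S x t ≤ 1/(2*t) * (2 * (inner ℝ (x - p) h : ℝ)) + 1/(2*t) * ‖h‖^2 := by
      have h1 := key1 hnobot hS y ht p hpt
      have h2 := normexpand y x p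
      rw [hyx] at h2
      have h3 : (inner ℝ h (x - p) : ℝ) = (inner ℝ (x - p) h : ℝ) := real_inner_comm _ _
      rw [h2, h3] at h1
      linarith [hpeq, h1]
    -- lower bound
    have hlower : 1/(2*t) * (2 * (inner ℝ (x - p) h : ℝ)) ≤ S y t - S x t := by
      obtain ⟨q, hqt, hqeq, _⟩ := exists_prox hconv hlsc hnobot hS y ht
      have h4 := hpstr q hqt
      have h5 := normexpand y x q
      rw [hyx] at h5
      rw [h5] at hqeq
      have h6 := norm_add_sq_real h (p - q)
      have h7 : (inner ℝ h (p - q) : ℝ) = (inner ℝ h (x - q) : ℝ) - (inner ℝ h (x - p) : ℝ) := by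
        rw [← inner_sub_right]
        congr 1
        abel
      have h8 : (inner ℝ h (x - p) : ℝ) = (inner ℝ (x - p) h : ℝ) := real_inner_comm _ _
      have h11 : ‖q - p‖^2 = ‖p - q‖^2 := by rw [norm_sub_rev]
      rw [h11] at h4
      have h6' : 1/(2*t) * ‖h + (p - q)‖^2
          = 1/(2*t) * (‖h‖^2 + 2 * (inner ℝ h (p - q) : ℝ) + ‖p - q‖^2) := by rw [h6]
      have h7' : 1/(2*t) * (2 * (inner ℝ h (p - q) : ℝ))
          = 1/(2*t) * (2 * ((inner ℝ h (x - q) : ℝ) - (inner ℝ h (x - p) : ℝ))) := by rw [h7]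
      have h10' : (0:ℝ) ≤ 1/(2*t) * ‖h + (p - q)‖^2 := by positivity
      rw [← h8]
      linarith [hqeq, h4, h6', h7', h10']
    have hkey : |S y t - S x t - 1/(2*t) * (2 * (inner ℝ (x - p) h : ℝ))| ≤ ε * ‖h‖ := by
      have hb : 1/(2*t) * ‖h‖^2 ≤ ε * ‖h‖ := by
        have h12 : ‖h‖^2 ≤ ‖h‖ * (2*t*ε) :=
          by nlinarith [norm_nonneg h]
        have h13 : 1/(2*t) * (‖h‖ * (2*t*ε)) = ε * ‖h‖ := by field_simp
        have h14 : 1/(2*t) * ‖h‖^2 ≤ 1/(2*t) * (‖h‖ * (2*t*ε)) := by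
          apply mul_le_mul_of_nonneg_left h12
          positivity
        linarith
      rw [abs_le]
      have hnn : 0 ≤ ε * ‖h‖ := mul_nonneg (le_of_lt hε) (norm_nonneg h)
      have hnn2 : (0:ℝ) ≤ 1/(2*t) * ‖h‖^2 := by positivity
      constructor
      · linarith [hupper, hlower, hb]
      · linarith [hupper, hlower, hb]
    calc ‖S (x + h) t - S x t - (InnerProductSpace.toDual ℝ (EuclideanSpace ℝ (Fin n)) g) h‖
        = |S y t - S x t - 1/(2*t) * (2 * (inner ℝ (x - p) h : ℝ))| := by
          rw [Real.norm_eq_abs, hinner]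
      _ ≤ ε * ‖h‖ := hkey
  -- ===== time derivative part =====
  set Qt : ℝ := ‖x - p‖^2 with hQt
  set M : ℝ := (S x (t/2) - S x (3*t)) * (6*t) with hMdef
  have ht2 : (0:ℝ) < t/2 := by linarith
  have h3t : (0:ℝ) < 3*t := by linarith
  -- uniform bound on proxes
  have hMb : ∀ s : ℝ, t/2 ≤ s → s ≤ 3*t/2 → ‖x - P s‖^2 ≤ M := by
    intro s hs1 hs2
    have hs : 0 < s := by linarith
    obtain ⟨hst, hseq, _⟩ := hPspec s hs
    have h1 := key1 hnobot hS x h3t (P s) hst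
    have h2 : S x s ≤ S x (t/2) := Smono hnobot hS x ht2 (by linarith)
    have h3 : (1:ℝ)/(2*(3*t)) = 1/(6*t) := by ring
    rw [h3] at h1
    have h4 : (1:ℝ)/(3*t) ≤ 1/(2*s) := one_div_le_one_div_of_le (by linarith) (by linarith)
    have h5 : (1:ℝ)/(3*t) = 2*(1/(6*t)) := by ring
    have h6 : ‖x - P s‖^2 * (1/(6*t)) ≤ ‖x - P s‖^2 * (1/(2*s) - 1/(6*t)) := by
      apply mul_le_mul_of_nonneg_left _ (sq_nonneg _)
      linarith
    have h7 : ‖x - P s‖^2 * (1/(2*s) - 1/(6*t)) ≤ S x (t/2) - S x (3*t) := by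
      linarith [hseq, h1, h2]
    have h8 : ‖x - P s‖^2 / (6*t) ≤ S x (t/2) - S x (3*t) := by
      have : ‖x - P s‖^2 / (6*t) = ‖x - P s‖^2 * (1/(6*t)) := by ring
      linarith [h6, h7, this.le, this.ge]
    have h9 := (div_le_iff₀ (by linarith : (0:ℝ) < 6*t)).1 h8
    rw [hMdef]; linarith
  have hM0 : 0 ≤ M := le_trans (sq_nonneg _) (by simpa [hp] using hMb t (by linarith) (by linarith))
  -- first-family inequality
  have hAfam : ∀ s s' : ℝ, 0 < s → 0 < s' →
      S x s - S x s' ≤ ‖x - P s'‖^2 * (1/(2*s) - 1/(2*s')) := by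
    intro s s' hs hs'
    obtain ⟨h1, h2, _⟩ := hPspec s' hs'
    have h3 := key1 hnobot hS x hs (P s') h1
    linarith [h2, h3]
  -- prox continuity estimate
  have hZest : ∀ s : ℝ, t/2 ≤ s → s ≤ 3*t/2 → s ≠ t →
      ‖P s - p‖^2 ≤ (2*M/t) * |s - t| := by
    intro s hs1 hs2 _
    have hs : 0 < s := by linarith
    have hsne : s ≠ 0 := ne_of_gt hs
    obtain ⟨hst, hseq, hsstr⟩ := hPspec s hs
    have hE1 : S x t - S x s + 1/(2*t) * ‖P s - p‖^2 ≤ (1/(2*t) - 1/(2*s)) * ‖x - P s‖^2 := by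
      have := hpstr (P s) hst
      linarith [hseq, this]
    have hE2 : S x s - S x t + 1/(2*s) * ‖p - P s‖^2 ≤ (1/(2*s) - 1/(2*t)) * Qt := by
      have h := hsstr p hpt
      rw [← hQt] at h
      linarith [hpeq, h]
    have hnr : ‖p - P s‖^2 = ‖P s - p‖^2 := by rw [norm_sub_rev]
    rw [hnr] at hE2
    have hE3 : (1/(2*t)) * ‖P s - p‖^2 ≤ (1/(2*t) - 1/(2*s)) * (‖x - P s‖^2 - Qt) := by
      have hpos : 0 ≤ (1/(2*s)) * ‖P s - p‖^2 := by positivity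
      linarith [hE1, hE2]
    have hid : (1:ℝ)/(2*t) - 1/(2*s) = (s - t)/(2*s*t) := by field_simp
    rw [hid] at hE3
    have habsQ : |‖x - P s‖^2 - Qt| ≤ M := by
      have hQs := hMb s hs1 hs2
      have hQtb : Qt ≤ M := by simpa [hp, hQt] using hMb t (by linarith) (by linarith)
      rw [abs_le]
      constructor
      · nlinarith [sq_nonneg ‖x - P s‖, sq_nonneg ‖x - p‖]
      · nlinarith [sq_nonneg ‖x - P s‖, sq_nonneg ‖x - p‖]
    have hE4 : (s - t)/(2*s*t) * (‖x - P s‖^2 - Qt) ≤ |s - t| / (2*s*t) * M := by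
      have h1 : (s - t)/(2*s*t) * (‖x - P s‖^2 - Qt)
          ≤ |(s - t)/(2*s*t) * (‖x - P s‖^2 - Qt)| := le_abs_self _
      have h2 : |(s - t)/(2*s*t) * (‖x - P s‖^2 - Qt)|
          = |s - t| / (2*s*t) * |‖x - P s‖^2 - Qt| := by
        rw [abs_mul, abs_div, abs_of_pos (by positivity : (0:ℝ) < 2*s*t)]
      have h3 : |s - t| / (2*s*t) * |‖x - P s‖^2 - Qt| ≤ |s - t| / (2*s*t) * M := by
        apply mul_le_mul_of_nonneg_left habsQ
        positivity
      linarith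
    -- so ‖P s - p‖²/(2t) ≤ |s-t| M/(2st), hence ‖P s - p‖² ≤ 2t|s-t|M/(2st) ≤ (2M/t)|s-t|
    have hE5 : ‖P s - p‖^2 ≤ (|s - t| / (2*s*t) * M) * (2*t) := by
      have h1 : (1/(2*t)) * ‖P s - p‖^2 = ‖P s - p‖^2 / (2*t) := by ring
      have h2 : ‖P s - p‖^2 / (2*t) ≤ |s - t| / (2*s*t) * M := by
        linarith [hE3, hE4, h1.le, h1.ge]
      exact (div_le_iff₀ (by linarith : (0:ℝ) < 2*t)).1 h2
    have hfin : (|s - t| / (2*s*t) * M) * (2*t) ≤ (2*M/t) * |s - t| := by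
      have hs4 : t*t ≤ 2*(s*t) := by nlinarith
      have h1 : (|s - t| / (2*s*t) * M) * (2*t) = (M * |s-t|) * (t/(s*t)) := by
        field_simp
      have h2 : (2*M/t) * |s - t| = (M * |s-t|) * (2/t) := by ring
      rw [h1, h2]
      apply mul_le_mul_of_nonneg_left _ (by positivity)
      rw [div_le_div_iff₀ (by positivity) (by positivity)]
      nlinarith
    linarith
  -- prox continuity
  have hPcont : Filter.Tendsto P (nhdsWithin t {s | s ≠ t}) (nhds p) := by
    rw [Metric.tendsto_nhdsWithin_nhds]
    intro ε hε
    have hC0' : (0:ℝ) ≤ 2*M/t := div_nonneg (by linarith) (le_of_lt ht)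
    have hC1 : (0:ℝ) < 2*M/t + 1 := by linarith
    refine ⟨min (t/2) (ε^2/(2*M/t + 1)), lt_min (by linarith) (div_pos (by positivity) hC1), ?_⟩
    intro s hsne hdist
    rw [Real.dist_eq] at hdist
    have hd1 : |s - t| < t/2 := lt_of_lt_of_le hdist (min_le_left _ _)
    have hd2 : |s - t| < ε^2/(2*M/t + 1) := lt_of_lt_of_le hdist (min_le_right _ _)
    have habs := abs_lt.1 hd1
    have hZ := hZest s (by linarith [habs.1, habs.2]) (by linarith [habs.1, habs.2]) hsne
    have hC0 : 0 ≤ 2*M/t := by positivity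
    have hlt : (2*M/t) * |s - t| < ε^2 := by
      have h1 : (2*M/t) * |s - t| ≤ (2*M/t + 1) * |s - t| := by
        nlinarith [abs_nonneg (s - t)]
      have h2 : (2*M/t + 1) * |s - t| < (2*M/t + 1) * (ε^2/(2*M/t + 1)) := by
        apply mul_lt_mul_of_pos_left hd2
        linarith
      have h3 : (2*M/t + 1) * (ε^2/(2*M/t + 1)) = ε^2 := by
        rw [mul_comm, div_mul_cancel₀ _ (ne_of_gt hC1)]
      linarith
    rw [dist_eq_norm]
    exact lt_of_pow_lt_pow_left₀ 2 (le_of_lt hε) (by linarith [hZ])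
  -- limits of the bounding functions
  have hdenom : Filter.Tendsto (fun s : ℝ => 2*s*t) (nhdsWithin t {s | s ≠ t}) (nhds (2*t*t)) := by
    apply Filter.Tendsto.mono_left _ nhdsWithin_le_nhds
    exact Continuous.tendsto ((continuous_const.mul continuous_id).mul continuous_const) t
  have hdne : (2*t*t : ℝ) ≠ 0 := ne_of_gt (by positivity)
  set D : ℝ := -Qt/(2*t*t) with hD
  have hAt : Filter.Tendsto (fun s : ℝ => -Qt/(2*s*t)) (nhdsWithin t {s | s ≠ t}) (nhds D) := by
    rw [hD]
    exact Filter.Tendsto.div (tendsto_const_nhds) hdenom hdne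
  have hQcont : Filter.Tendsto (fun s : ℝ => ‖x - P s‖^2) (nhdsWithin t {s | s ≠ t}) (nhds Qt) := by
    have hcont2 : Continuous (fun q : EuclideanSpace ℝ (Fin n) => ‖x - q‖^2) :=
      ((continuous_const.sub continuous_id).norm).pow 2
    have := (hcont2.tendsto p).comp hPcont
    exact this
  have hBt : Filter.Tendsto (fun s : ℝ => -‖x - P s‖^2/(2*s*t)) (nhdsWithin t {s | s ≠ t}) (nhds D) := by
    rw [hD]
    exact Filter.Tendsto.div hQcont.neg hdenom hdne
  -- slope squeeze
  have hslope : ∀ᶠ s in nhdsWithin t {s | s ≠ t},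
      min (-Qt/(2*s*t)) (-‖x - P s‖^2/(2*s*t)) ≤ slope (fun s => S x s) t s ∧
      slope (fun s => S x s) t s ≤ max (-Qt/(2*s*t)) (-‖x - P s‖^2/(2*s*t)) := by
    have hIoo : Set.Ioo (t/2) (3*t/2) ∈ nhdsWithin t {s | s ≠ t} :=
      nhdsWithin_le_nhds (Ioo_mem_nhds (by linarith) (by linarith))
    filter_upwards [hIoo, self_mem_nhdsWithin] with s hsIoo hsne
    have hs : 0 < s := by linarith [hsIoo.1]
    have hsne' : s ≠ 0 := ne_of_gt hs
    have hsnet : s ≠ t := hsne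
    have hkeyA : S x s - S x t ≤ ‖x - p‖^2 * (1/(2*s) - 1/(2*t)) := by
      have := hAfam s t hs ht
      simpa [hp] using this
    have hkeyB : S x t - S x s ≤ ‖x - P s‖^2 * (1/(2*t) - 1/(2*s)) := hAfam t s ht hs
    have hidA : (-(Qt/(2*s*t))) * (s - t) = Qt * (1/(2*s) - 1/(2*t)) := by
      field_simp; ring
    have hidB : (-(‖x - P s‖^2/(2*s*t))) * (s - t)
        = -(‖x - P s‖^2 * (1/(2*t) - 1/(2*s))) := by
      field_simp
    have hQteq : Qt = ‖x - p‖^2 := hQt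
    rw [slope_def_field]
    rcases lt_or_gt_of_ne hsnet with hlt | hgt
    · -- s < t
      have hst : s - t < 0 := by linarith
      constructor
      · refine le_trans (min_le_left _ _) ?_
        rw [le_div_iff_of_neg hst]
        have : -Qt/(2*s*t) = -(Qt/(2*s*t)) := by ring
        rw [this]
        rw [hidA, hQteq]
        linarith [hkeyA]
      · refine le_trans ?_ (le_max_right _ _)
        rw [div_le_iff_of_neg hst]
        have : -‖x - P s‖^2/(2*s*t) = -(‖x - P s‖^2/(2*s*t)) := by ring
        rw [this, hidB]
        linarith [hkeyB]
    · -- t < s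
      have hst : 0 < s - t := by linarith
      constructor
      · refine le_trans (min_le_right _ _) ?_
        rw [le_div_iff₀ hst]
        have : -‖x - P s‖^2/(2*s*t) = -(‖x - P s‖^2/(2*s*t)) := by ring
        rw [this, hidB]
        linarith [hkeyB]
      · refine le_trans ?_ (le_max_left _ _)
        rw [div_le_iff₀ hst]
        have : -Qt/(2*s*t) = -(Qt/(2*s*t)) := by ring
        rw [this, hidA, hQteq]
        linarith [hkeyA]
  have hminT : Filter.Tendsto (fun s : ℝ => min (-Qt/(2*s*t)) (-‖x - P s‖^2/(2*s*t)))
      (nhdsWithin t {s | s ≠ t}) (nhds D) := by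
    have := hAt.min hBt
    simpa using this
  have hmaxT : Filter.Tendsto (fun s : ℝ => max (-Qt/(2*s*t)) (-‖x - P s‖^2/(2*s*t)))
      (nhdsWithin t {s | s ≠ t}) (nhds D) := by
    have := hAt.max hBt
    simpa using this
  have hslopeT : Filter.Tendsto (slope (fun s => S x s) t) (nhdsWithin t {s | s ≠ t}) (nhds D) :=
    tendsto_of_tendsto_of_tendsto_of_le_of_le' hminT hmaxT
      (hslope.mono fun s hs => hs.1) (hslope.mono fun s hs => hs.2)
  have hderiv : HasDerivAt (fun s => S x s) D t := by
    rw [hasDerivAt_iff_tendsto_slope]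
    exact hslopeT
  refine ⟨hgrad.differentiableAt, ?_⟩
  have hgradeq : gradient (fun y => S y t) x = g := hgrad.gradient
  have hval : -((1 : ℝ) / 2 * ‖gradient (fun y => S y t) x‖ ^ 2) = D := by
    have hns : ‖g‖^2 = (1/t)^2 * ‖x - p‖^2 := by
      rw [hg, norm_smul, mul_pow, Real.norm_eq_abs, sq_abs]
    rw [hgradeq, hns, hD, hQt]
    ring
  rw [hval]
  exact hderiv
end

section
/- Let J : ℝ^n → ℝ ∪ {+∞} be proper and bounded below and t > 0. For each ε > 0 suppose the integral Z_ε(x) = ∫_{ℝ^n} exp(−(J(u) + (1/(2t))‖x−u‖²)/ε) du is finite and positive, and define S_ε(x,t) = −ε ln( (2πtε)^{−n/2} Z_ε(x) ). Then for every fixed x and t, lim_{ε→0⁺} S_ε(x,t) = inf_{u∈ℝ^n} {J(u) + (1/(2t))‖x−u‖²}, provided J is convex, proper, lower semicontinuous with int(dom J) ≠ ∅ and inf J = 0. -/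
open MeasureTheory Filter Real Pointwise

private lemma aux_xlog (c : ℝ) (hc : 0 < c) :
    Filter.Tendsto (fun ε : ℝ => ε * Real.log (c * ε)) (nhdsWithin 0 (Set.Ioi 0)) (nhds 0) := by
  have ha : Tendsto (fun ε : ℝ => ε * Real.log c) (nhdsWithin 0 (Set.Ioi 0)) (nhds 0) := by
    have h0 : Tendsto (fun ε : ℝ => ε) (nhdsWithin 0 (Set.Ioi 0)) (nhds 0) :=
      tendsto_id.mono_left nhdsWithin_le_nhds
    simpa using h0.mul_const (Real.log c)
  have hb : Tendsto (fun ε : ℝ => Real.log ε * ε) (nhdsWithin 0 (Set.Ioi 0)) (nhds 0) := by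
    have := tendsto_log_mul_rpow_nhdsGT_zero (r := 1) one_pos
    refine this.congr' ?_
    filter_upwards [self_mem_nhdsWithin] with ε hε
    rw [Real.rpow_one]
  have h1 := ha.add hb
  rw [add_zero] at h1
  refine h1.congr' ?_
  filter_upwards [self_mem_nhdsWithin] with ε hε
  rw [Real.log_mul (ne_of_gt hc) (ne_of_gt hε)]
  ring

/-- Vanishing viscosity (Laplace principle) limit: with
`S_ε(x,t) = -ε ln((2πtε)^{-n/2} ∫ e^{-(J(u)+‖x-u‖²/(2t))/ε} du)` and `J ∈ Γ₀(ℝⁿ)`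
bounded below with `inf J = 0` and `int(dom J) ≠ ∅`, one has
`S_ε(x,t) → inf_u {J(u) + (1/(2t))‖x-u‖²}` as `ε → 0⁺` (with `e^{-∞} = 0`). -/
theorem stmt8 (n : ℕ) (t : ℝ) (ht : 0 < t) (J : EuclideanSpace ℝ (Fin n) → EReal)
    (hproper : ∃ u, J u ≠ ⊤)
    (hnobot : ∀ u, J u ≠ ⊥)
    (hconv : ∀ u v : EuclideanSpace ℝ (Fin n), ∀ a b : ℝ, 0 ≤ a → 0 ≤ b → a + b = 1 →
      J (a • u + b • v) ≤ (a : EReal) * J u + (b : EReal) * J v)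
    (hlsc : LowerSemicontinuous J)
    (hint : (interior {u : EuclideanSpace ℝ (Fin n) | J u ≠ ⊤}).Nonempty)
    (hinf : (⨅ u, J u) = 0)
    (x : EuclideanSpace ℝ (Fin n))
    (φ : ℝ → EuclideanSpace ℝ (Fin n) → ℝ)
    (hφ : ∀ ε : ℝ, 0 < ε → ∀ u, φ ε u =
      if J u = ⊤ then 0
      else Real.exp (-((J u).toReal + (1 / (2 * t)) * ‖x - u‖ ^ 2) / ε))
    (hZfin : ∀ ε : ℝ, 0 < ε → Integrable (φ ε))
    (hZpos : ∀ ε : ℝ, 0 < ε → 0 < ∫ u, φ ε u) :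
    Filter.Tendsto
      (fun ε : ℝ =>
        ((-ε * Real.log ((2 * Real.pi * t * ε) ^ (-(n : ℝ) / 2) * ∫ u, φ ε u) : ℝ) : EReal))
      (nhdsWithin 0 (Set.Ioi 0))
      (nhds (⨅ u : EuclideanSpace ℝ (Fin n),
        (J u + (((1 / (2 * t)) * ‖x - u‖ ^ 2 : ℝ) : EReal)))) := by
  classical
  set q : EuclideanSpace ℝ (Fin n) → ℝ := fun u => (1 / (2 * t)) * ‖x - u‖ ^ 2 with hqdef
  have hq0 : ∀ u, 0 ≤ q u := by
    intro u
    have : (0:ℝ) ≤ ‖x - u‖ ^ 2 := sq_nonneg _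
    positivity
  set M : EReal := ⨅ u : EuclideanSpace ℝ (Fin n),
      (J u + (((1 / (2 * t)) * ‖x - u‖ ^ 2 : ℝ) : EReal)) with hMdef
  have hJ0 : ∀ u, (0 : EReal) ≤ J u := fun u => hinf ▸ iInf_le J u
  have hM0 : (0 : EReal) ≤ M := by
    refine le_iInf fun u => ?_
    have h1 : (0 : EReal) ≤ ((q u : ℝ) : EReal) := by
      exact_mod_cast hq0 u
    calc (0 : EReal) = 0 + 0 := by simp
    _ ≤ J u + ((q u : ℝ) : EReal) := add_le_add (hJ0 u) h1
  have hMtop : M ≠ ⊤ := by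
    obtain ⟨u₀, hu₀⟩ := hproper
    have h1 : M ≤ J u₀ + ((q u₀ : ℝ) : EReal) := iInf_le _ u₀
    intro hM
    rw [hM] at h1
    have := top_le_iff.1 h1
    have h2 : J u₀ + ((q u₀ : ℝ) : EReal) ≠ ⊤ := by
      rw [← EReal.coe_toReal hu₀ (hnobot u₀), ← EReal.coe_add]
      exact EReal.coe_ne_top _
    exact h2 this
  have hMbot : M ≠ ⊥ := fun h => by simp [h] at hM0
  set m : ℝ := M.toReal with hmdef
  have hmM : ((m : ℝ) : EReal) = M := EReal.coe_toReal hMtop hMbot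
  -- a(u) ≥ m on the domain
  have ham : ∀ u, J u ≠ ⊤ → m ≤ (J u).toReal + q u := by
    intro u hu
    have h1 : M ≤ J u + ((q u : ℝ) : EReal) := iInf_le _ u
    rw [← hmM, ← EReal.coe_toReal hu (hnobot u), ← EReal.coe_add] at h1
    exact_mod_cast h1
  -- nonnegativity of φ
  have hφ0 : ∀ ε : ℝ, 0 < ε → ∀ u, 0 ≤ φ ε u := by
    intro ε hε u
    rw [hφ ε hε u]
    split
    · exact le_rfl
    · exact (Real.exp_pos _).le
  set Z : ℝ → ℝ := fun ε => ∫ u, φ ε u with hZdef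
  -- rewrite the function
  have hfeq : ∀ ε : ℝ, 0 < ε →
      -ε * Real.log ((2 * Real.pi * t * ε) ^ (-(n : ℝ) / 2) * Z ε)
        = (n : ℝ) / 2 * (ε * Real.log (2 * Real.pi * t * ε)) + -(ε * Real.log (Z ε)) := by
    intro ε hε
    have hbase : 0 < 2 * Real.pi * t * ε := by positivity
    have hA : (0:ℝ) < (2 * Real.pi * t * ε) ^ (-(n : ℝ) / 2) := Real.rpow_pos_of_pos hbase _
    rw [Real.log_mul (ne_of_gt hA) (ne_of_gt (hZpos ε hε)), Real.log_rpow hbase]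
    ring
  -- LOWER BOUND: for ε ∈ (0,1]
  have hlow : ∀ ε ∈ Set.Ioc (0:ℝ) 1,
      m - ε * (m + Real.log (Z 1)) ≤ -(ε * Real.log (Z ε)) := by
    intro ε hε
    have hε0 : 0 < ε := hε.1
    have hZle : Z ε ≤ Real.exp (-m/ε) * Real.exp m * Z 1 := by
      have hint2 : Integrable (fun u => Real.exp (-m/ε) * Real.exp m * φ 1 u) :=
        (hZfin 1 one_pos).const_mul _
      have hpt : ∀ u, φ ε u ≤ Real.exp (-m/ε) * Real.exp m * φ 1 u := by
        intro u
        rw [hφ ε hε0 u, hφ 1 one_pos u]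
        split
        · simp
        next hu =>
          rw [← Real.exp_add, ← Real.exp_add]
          apply Real.exp_le_exp.2
          set aa := (J u).toReal + 1 / (2 * t) * ‖x - u‖ ^ 2 with haadef
          have haa : m ≤ aa := ham u hu
          have h1 : aa - m ≤ (aa - m)/ε := by
            rw [le_div_iff₀ hε0]
            nlinarith [hε.2]
          have h2 : -aa/ε = -m/ε - (aa - m)/ε := by
            field_simp
            ring
          rw [h2]
          have h3 : -m / ε + m + -aa / 1 = -m/ε - (aa - m) := by ring
          rw [h3]
          linarith
      calc Z ε ≤ ∫ u, Real.exp (-m/ε) * Real.exp m * φ 1 u :=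
            integral_mono (hZfin ε hε0) hint2 hpt
      _ = Real.exp (-m/ε) * Real.exp m * Z 1 := by
            rw [MeasureTheory.integral_const_mul]
    have h4 : Real.log (Z ε) ≤ -m/ε + (m + Real.log (Z 1)) := by
      have := Real.log_le_log (hZpos ε hε0) hZle
      rwa [Real.log_mul (by positivity) (ne_of_gt (hZpos 1 one_pos)),
        Real.log_mul (Real.exp_ne_zero _) (Real.exp_ne_zero _),
        Real.log_exp, Real.log_exp, add_assoc] at this
    have h5 : ε * Real.log (Z ε) ≤ ε * (-m/ε + (m + Real.log (Z 1))) :=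
      mul_le_mul_of_nonneg_left h4 hε0.le
    have h6 : ε * (-m/ε + (m + Real.log (Z 1))) = -m + ε*(m + Real.log (Z 1)) := by
      field_simp
    linarith
  -- UPPER BOUND: for every δ > 0, exists c such that for all ε > 0,
  -- -(ε log Z ε) ≤ (m + δ) - ε * c
  have hup : ∀ δ : ℝ, 0 < δ → ∃ c : ℝ, ∀ ε : ℝ, 0 < ε →
      -(ε * Real.log (Z ε)) ≤ (m + δ) - ε * c := by
    intro δ hδ
    -- choose a near-minimizer u₁
    have hMlt : M < ((m + δ/2 : ℝ) : EReal) := by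
      rw [← hmM]
      exact_mod_cast (by linarith : m < m + δ/2)
    rw [hMdef] at hMlt
    obtain ⟨u₁, hu₁⟩ := iInf_lt_iff.1 hMlt
    have hu₁top : J u₁ ≠ ⊤ := by
      intro h
      rw [h] at hu₁
      rw [EReal.top_add_of_ne_bot (EReal.coe_ne_bot _)] at hu₁
      exact (not_top_lt hu₁)
    have hj₁ : (J u₁).toReal + q u₁ < m + δ/2 := by
      rw [← EReal.coe_toReal hu₁top (hnobot u₁), ← EReal.coe_add] at hu₁
      exact_mod_cast hu₁
    set j₁ : ℝ := (J u₁).toReal with hj₁def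
    -- a sublevel set of positive finite measure
    obtain ⟨v₀, hv₀⟩ := hint
    obtain ⟨r₀, hr₀, hball⟩ := Metric.isOpen_iff.1 isOpen_interior v₀ hv₀
    have hballD : Metric.ball v₀ r₀ ⊆ {u | J u ≠ ⊤} := hball.trans interior_subset
    set Sk : ℕ → Set (EuclideanSpace ℝ (Fin n)) :=
      fun k => {u | J u ≤ (((k:ℝ)) : EReal)} ∩ Metric.closedBall 0 k with hSkdef
    have hSkclosed : ∀ k, IsClosed (Sk k) :=
      fun k => (hlsc.isClosed_preimage _).inter Metric.isClosed_closedBall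
    have hSkmono : Monotone Sk := by
      intro k l hkl
      apply Set.inter_subset_inter
      · intro u hu
        have hu' : J u ≤ (((k:ℝ)) : EReal) := hu
        refine le_trans hu' ?_
        exact_mod_cast (Nat.cast_le.2 hkl : ((k:ℝ)) ≤ (l:ℝ))
      · exact Metric.closedBall_subset_closedBall (by exact_mod_cast hkl)
    have hcover : Metric.ball v₀ r₀ ⊆ ⋃ k, Sk k := by
      intro u hu
      have h1 : J u ≠ ⊤ := hballD hu
      obtain ⟨k₁, hk₁⟩ := exists_nat_ge (max (J u).toReal ‖u‖)
      refine Set.mem_iUnion.2 ⟨k₁, ?_, ?_⟩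
      · show J u ≤ _
        rw [← EReal.coe_toReal h1 (hnobot u)]
        exact_mod_cast le_trans (le_max_left _ _) hk₁
      · rw [Metric.mem_closedBall, dist_zero_right]
        exact le_trans (le_max_right _ _) hk₁
    have hpos : 0 < volume (⋃ k, Sk k) :=
      lt_of_lt_of_le (Metric.measure_ball_pos _ _ hr₀) (measure_mono hcover)
    rw [(hSkmono.directed_le).measure_iUnion] at hpos
    obtain ⟨k₀, hSpos⟩ := lt_iSup_iff.1 hpos
    set S := Sk k₀ with hSdef
    have hScompact : IsCompact S :=
      (isCompact_closedBall 0 k₀).of_isClosed_subset (hSkclosed k₀) Set.inter_subset_right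
    -- choose the interpolation parameter
    set g : ℝ → ℝ := fun l => (1-l)*j₁ + l*(k₀:ℝ)
      + (1/(2*t)) * (‖x - u₁‖ + l*((k₀:ℝ) + ‖u₁‖))^2 with hgdef
    have hgcont : ContinuousAt g 0 := by fun_prop
    have hg0 : g 0 < m + δ := by
      have e1 : g 0 = j₁ + 1/(2*t) * ‖x - u₁‖^2 := by
        rw [hgdef]
        ring_nf
      have e2 : q u₁ = 1/(2*t) * ‖x - u₁‖^2 := rfl
      rw [e2] at hj₁
      rw [e1]
      linarith
    have hev : ∀ᶠ l in nhdsWithin (0:ℝ) (Set.Ioi 0), g l < m + δ ∧ l < 1 ∧ 0 < l := by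
      have h1 : ∀ᶠ l in nhdsWithin (0:ℝ) (Set.Ioi 0), g l < m + δ :=
        (hgcont.continuousWithinAt.tendsto).eventually_lt_const hg0
      have h2 : ∀ᶠ l in nhdsWithin (0:ℝ) (Set.Ioi 0), l < 1 :=
        Filter.mem_of_superset (Ioo_mem_nhdsGT_of_mem (Set.left_mem_Ico.2 one_pos))
          (fun l hl => hl.2)
      have h3 : ∀ᶠ l in nhdsWithin (0:ℝ) (Set.Ioi 0), 0 < l := self_mem_nhdsWithin
      exact h1.and (h2.and h3)
    obtain ⟨lam, hglam, hlam1, hlam0⟩ := hev.exists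
    -- the good set A
    set A := (fun w => u₁ + lam • (w - u₁)) '' S with hAdef
    have hAcompact : IsCompact A := by
      apply hScompact.image
      fun_prop
    have hAvadd : A = ((1-lam) • u₁) +ᵥ (lam • S) := by
      rw [← Set.image_vadd, ← Set.image_smul, Set.image_image, hAdef]
      apply Set.image_congr'
      intro w
      show u₁ + lam • (w - u₁) = (1-lam) • u₁ +ᵥ lam • w
      rw [vadd_eq_add]
      module
    have hAvol : volume A ≠ 0 := by
      rw [hAvadd, measure_vadd, Measure.addHaar_smul]
      refine mul_ne_zero ?_ (ne_of_gt hSpos)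
      simp only [ne_eq, ENNReal.ofReal_eq_zero, not_le, abs_pos]
      positivity
    have hAfin : volume A ≠ ⊤ := hAcompact.measure_lt_top.ne
    set vA : ℝ := (volume A).toReal with hvAdef
    have hvApos : 0 < vA := ENNReal.toReal_pos hAvol hAfin
    -- the key bound on A
    have hbound : ∀ a ∈ A, J a ≠ ⊤ ∧ (J a).toReal + q a ≤ m + δ := by
      rintro a ⟨w, hw, rfl⟩
      obtain ⟨hw1, hw2⟩ := hw
      rw [Metric.mem_closedBall, dist_zero_right] at hw2
      have hcw : (J w).toReal ≤ (k₀:ℝ) := by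
        have := EReal.toReal_le_toReal hw1 (hnobot w) (EReal.coe_ne_top _)
        rw [EReal.toReal_coe] at this
        exact this
      have hw1' : J w ≤ (((k₀:ℝ)) : EReal) := hw1
      have hJwtop : J w ≠ ⊤ := fun h => (EReal.coe_lt_top _).not_ge (h ▸ hw1')
      have hJw : J w = (((J w).toReal : ℝ) : EReal) :=
        (EReal.coe_toReal hJwtop (hnobot w)).symm
      have hpteq : u₁ + lam • (w - u₁) = (1-lam) • u₁ + lam • w := by module
      have hcomb := hconv u₁ w (1-lam) lam (by linarith) hlam0.le (by ring)
      rw [← hpteq] at hcomb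
      have hRHS : ((1-lam : ℝ) : EReal) * J u₁ + ((lam : ℝ) : EReal) * J w
          = (((1-lam)*j₁ + lam*(J w).toReal : ℝ) : EReal) := by
        conv_lhs => rw [← EReal.coe_toReal hu₁top (hnobot u₁), hJw]
        rw [← EReal.coe_mul, ← EReal.coe_mul, ← EReal.coe_add]
      rw [hRHS] at hcomb
      have hatop : J (u₁ + lam • (w - u₁)) ≠ ⊤ :=
        fun h => (EReal.coe_lt_top _).not_ge (h ▸ hcomb)
      refine ⟨hatop, ?_⟩
      have htr : (J (u₁ + lam • (w - u₁))).toReal ≤ (1-lam)*j₁ + lam*(J w).toReal := by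
        have := EReal.toReal_le_toReal hcomb (hnobot _) (EReal.coe_ne_top _)
        rw [EReal.toReal_coe] at this
        exact this
      have hq : q (u₁ + lam • (w - u₁)) ≤ (1/(2*t)) * (‖x - u₁‖ + lam*((k₀:ℝ) + ‖u₁‖))^2 := by
        have hn1 : ‖x - (u₁ + lam • (w - u₁))‖ ≤ ‖x - u₁‖ + lam*((k₀:ℝ) + ‖u₁‖) := by
          have he : x - (u₁ + lam • (w - u₁)) = (x - u₁) - lam • (w - u₁) := by module
          rw [he]
          refine le_trans (norm_sub_le _ _) ?_
          have hn2 : ‖lam • (w - u₁)‖ = lam * ‖w - u₁‖ := by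
            rw [norm_smul, Real.norm_eq_abs, abs_of_pos hlam0]
          have hn3 : ‖w - u₁‖ ≤ (k₀:ℝ) + ‖u₁‖ :=
            le_trans (norm_sub_le _ _) (by linarith)
          rw [hn2]
          have := mul_le_mul_of_nonneg_left hn3 hlam0.le
          linarith
        show (1 / (2 * t)) * ‖x - (u₁ + lam • (w - u₁))‖ ^ 2 ≤ _
        have h2t : (0:ℝ) ≤ 1/(2*t) := by positivity
        apply mul_le_mul_of_nonneg_left _ h2t
        exact pow_le_pow_left₀ (norm_nonneg _) hn1 2
      have hlamk : lam*(J w).toReal ≤ lam*(k₀:ℝ) :=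
        mul_le_mul_of_nonneg_left hcw hlam0.le
      have : (1-lam)*j₁ + lam*(k₀:ℝ) + (1/(2*t)) * (‖x - u₁‖ + lam*((k₀:ℝ) + ‖u₁‖))^2
          < m + δ := hglam
      linarith
    -- conclude
    refine ⟨Real.log vA, fun ε hε => ?_⟩
    have hA1 : ∫ u in A, φ ε u ≤ Z ε :=
      setIntegral_le_integral (hZfin ε hε) (Filter.Eventually.of_forall (hφ0 ε hε))
    have hA2 : Real.exp (-(m+δ)/ε) * vA ≤ ∫ u in A, φ ε u := by
      refine setIntegral_ge_of_const_le_real hAcompact.measurableSet hAfin ?_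
        ((hZfin ε hε).integrableOn)
      intro u hu
      obtain ⟨hutop, hub⟩ := hbound u hu
      rw [hφ ε hε u, if_neg hutop]
      apply Real.exp_le_exp.2
      rw [div_le_div_iff_of_pos_right hε]
      have : (J u).toReal + 1 / (2 * t) * ‖x - u‖ ^ 2 ≤ m + δ := hub
      linarith
    have hZgeq : Real.exp (-(m+δ)/ε) * vA ≤ Z ε := le_trans hA2 hA1
    have h4 : -(m+δ)/ε + Real.log vA ≤ Real.log (Z ε) := by
      have := Real.log_le_log (by positivity) hZgeq
      rwa [Real.log_mul (Real.exp_ne_zero _) (ne_of_gt hvApos), Real.log_exp] at this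
    have h5 : ε * (-(m+δ)/ε + Real.log vA) ≤ ε * Real.log (Z ε) :=
      mul_le_mul_of_nonneg_left h4 hε.le
    have h6 : ε * (-(m+δ)/ε + Real.log vA) = -(m+δ) + ε * Real.log vA := by
      field_simp
    linarith
  -- ASSEMBLY
  rw [← hmM]
  rw [EReal.tendsto_coe]
  have hG : Tendsto (fun ε : ℝ => (n : ℝ) / 2 * (ε * Real.log (2 * Real.pi * t * ε)))
      (nhdsWithin 0 (Set.Ioi 0)) (nhds 0) := by
    have := (aux_xlog (2 * Real.pi * t) (by positivity)).const_mul ((n : ℝ) / 2)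
    simpa using this
  have hioc : Set.Ioc (0:ℝ) 1 ∈ nhdsWithin (0:ℝ) (Set.Ioi 0) :=
    Ioc_mem_nhdsGT_of_mem (Set.left_mem_Ico.2 one_pos)
  rw [tendsto_order]
  constructor
  · intro a ha
    have hTL : Tendsto (fun ε : ℝ => (n : ℝ) / 2 * (ε * Real.log (2 * Real.pi * t * ε))
        + (m - ε * (m + Real.log (Z 1)))) (nhdsWithin 0 (Set.Ioi 0)) (nhds m) := by
      have h2 : Tendsto (fun ε : ℝ => m - ε * (m + Real.log (Z 1)))
          (nhdsWithin 0 (Set.Ioi 0)) (nhds m) := by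
        have h0 : Tendsto (fun ε : ℝ => ε) (nhdsWithin 0 (Set.Ioi 0)) (nhds 0) :=
          tendsto_id.mono_left nhdsWithin_le_nhds
        have := (tendsto_const_nhds (x := m) (f := nhdsWithin (0:ℝ) (Set.Ioi 0))).sub
          (h0.mul_const (m + Real.log (Z 1)))
        simpa using this
      simpa using hG.add h2
    filter_upwards [hTL.eventually_const_lt ha, hioc, self_mem_nhdsWithin] with ε h1 h2 h3
    have h4 := hlow ε h2
    rw [hfeq ε h3]
    linarith
  · intro a ha
    obtain ⟨c, hc⟩ := hup ((a - m)/2) (by linarith)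
    have hTU : Tendsto (fun ε : ℝ => (n : ℝ) / 2 * (ε * Real.log (2 * Real.pi * t * ε))
        + ((m + (a - m)/2) - ε * c)) (nhdsWithin 0 (Set.Ioi 0)) (nhds (m + (a-m)/2)) := by
      have h0 : Tendsto (fun ε : ℝ => ε) (nhdsWithin 0 (Set.Ioi 0)) (nhds 0) :=
        tendsto_id.mono_left nhdsWithin_le_nhds
      have h2 := (tendsto_const_nhds (x := (m + (a-m)/2))
        (f := nhdsWithin (0:ℝ) (Set.Ioi 0))).sub (h0.mul_const c)
      simp only [mul_zero, zero_mul, sub_zero] at h2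
      simpa using hG.add h2
    filter_upwards [hTU.eventually_lt_const (show m + (a-m)/2 < a by linarith), self_mem_nhdsWithin] with ε h1 h3
    have h4 := hc ε h3
    rw [hfeq ε h3]
    linarith
end

section
/- Let J_1,...,J_m : ℝ^n → ℝ be measurable, t > 0, ε > 0, and suppose each integral Z_i(x) = ∫_{ℝ^n} exp(−(J_i(u) + (1/(2t))‖x−u‖²)/ε) du is finite and positive. Define S_{i,ε}(x,t) = −ε ln((2πtε)^{−n/2} Z_i(x)) and let J(x) = −ε ln(∑_{i=1}^m e^{−J_i(x)/ε}). Then −ε ln((2πtε)^{−n/2} ∫_{ℝ^n} exp(−(J(u) + (1/(2t))‖x−u‖²)/ε) du) = −ε ln(∑_{i=1}^m e^{−S_{i,ε}(x,t)/ε}). -/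
open MeasureTheory
open scoped BigOperators

/-- Min-plus analogue for viscous HJ PDEs: the Cole–Hopf transformed solution with
soft-min initial data `J = -ε ln(∑ e^{-J_i/ε})` equals the soft-min of the individual
transformed solutions `S_{i,ε}`. -/
theorem stmt9 (n m : ℕ) (hm : 0 < m)
    (J : Fin m → EuclideanSpace ℝ (Fin n) → ℝ)
    (hJmeas : ∀ i, Measurable (J i))
    (t ε : ℝ) (ht : 0 < t) (hε : 0 < ε)
    (x : EuclideanSpace ℝ (Fin n))
    (hint : ∀ i, Integrable
      (fun u => Real.exp (-(J i u + (1 / (2 * t)) * ‖x - u‖ ^ 2) / ε)))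
    (hpos : ∀ i, 0 < ∫ u, Real.exp (-(J i u + (1 / (2 * t)) * ‖x - u‖ ^ 2) / ε)) :
    -ε * Real.log ((2 * Real.pi * t * ε) ^ (-(n : ℝ) / 2) *
        ∫ u, Real.exp
          (-((-ε * Real.log (∑ i : Fin m, Real.exp (-(J i u) / ε)))
              + (1 / (2 * t)) * ‖x - u‖ ^ 2) / ε))
      = -ε * Real.log (∑ i : Fin m, Real.exp
          (-(-ε * Real.log ((2 * Real.pi * t * ε) ^ (-(n : ℝ) / 2) *
              ∫ u, Real.exp (-(J i u + (1 / (2 * t)) * ‖x - u‖ ^ 2) / ε))) / ε)) := by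
  have hC : (0:ℝ) < (2 * Real.pi * t * ε) ^ (-(n : ℝ) / 2) := by
    apply Real.rpow_pos_of_pos
    positivity
  -- inner integrand equals sum of individual integrands
  have hinner : (∫ u, Real.exp
          (-((-ε * Real.log (∑ i : Fin m, Real.exp (-(J i u) / ε)))
              + (1 / (2 * t)) * ‖x - u‖ ^ 2) / ε))
      = ∑ i : Fin m, ∫ u, Real.exp (-(J i u + (1 / (2 * t)) * ‖x - u‖ ^ 2) / ε) := by
    rw [← integral_finset_sum _ (fun i _ => hint i)]
    congr 1
    funext u
    have hS : (0:ℝ) < ∑ i : Fin m, Real.exp (-(J i u) / ε) := by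
      apply Finset.sum_pos (fun i _ => Real.exp_pos _)
      simpa [Finset.univ_nonempty_iff] using Fin.pos_iff_nonempty.mp hm
    have h1 : -((-ε * Real.log (∑ i : Fin m, Real.exp (-(J i u) / ε)))
              + (1 / (2 * t)) * ‖x - u‖ ^ 2) / ε
        = Real.log (∑ i : Fin m, Real.exp (-(J i u) / ε))
          + (-((1 / (2 * t)) * ‖x - u‖ ^ 2) / ε) := by
      field_simp
      ring
    rw [h1, Real.exp_add, Real.exp_log hS, Finset.sum_mul]
    congr 1
    funext i
    rw [← Real.exp_add]
    congr 1
    ring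
  rw [hinner]
  congr 1
  have hterm : ∀ i : Fin m, Real.exp
          (-(-ε * Real.log ((2 * Real.pi * t * ε) ^ (-(n : ℝ) / 2) *
              ∫ u, Real.exp (-(J i u + (1 / (2 * t)) * ‖x - u‖ ^ 2) / ε))) / ε)
      = (2 * Real.pi * t * ε) ^ (-(n : ℝ) / 2) *
              ∫ u, Real.exp (-(J i u + (1 / (2 * t)) * ‖x - u‖ ^ 2) / ε) := by
    intro i
    rw [show -(-ε * Real.log ((2 * Real.pi * t * ε) ^ (-(n : ℝ) / 2) *
        ∫ u, Real.exp (-(J i u + (1 / (2 * t)) * ‖x - u‖ ^ 2) / ε))) / ε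
        = Real.log ((2 * Real.pi * t * ε) ^ (-(n : ℝ) / 2) *
        ∫ u, Real.exp (-(J i u + (1 / (2 * t)) * ‖x - u‖ ^ 2) / ε)) by field_simp]
    rw [Real.exp_log (mul_pos hC (hpos i))]
  rw [Finset.sum_congr rfl fun i _ => hterm i, ← Finset.mul_sum]
end

section
/- Let σ_1,...,σ_m > 0, μ_1,...,μ_m ∈ ℝ^n, t > 0, ε > 0, and define S_ε(x,t) = −ε ln(∑_{i=1}^m (σ_i²/(σ_i²+t))^{n/2} exp(−‖x−μ_i‖²/(2(σ_i²+t)ε))). Then S_ε is differentiable in x and x − t ∇_x S_ε(x,t) = [∑_{i=1}^m ((σ_i² x + t μ_i)/(σ_i²+t)) w_i(x)] / [∑_{i=1}^m w_i(x)], where w_i(x) = (σ_i²/(σ_i²+t))^{n/2} exp(−‖x−μ_i‖²/(2(σ_i²+t)ε)). -/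
open scoped BigOperators

lemma aux_grad {n m : ℕ} (hm : 0 < m) (a c : Fin m → ℝ) (ha : ∀ i, 0 < a i)
    (hc : ∀ i, 0 < c i) (ε : ℝ) (hε : 0 < ε) (μ : Fin m → EuclideanSpace ℝ (Fin n))
    (x : EuclideanSpace ℝ (Fin n)) :
    HasGradientAt (fun y : EuclideanSpace ℝ (Fin n) =>
        -ε * Real.log (∑ i : Fin m, c i * Real.exp (-‖y - μ i‖ ^ 2 / (2 * a i * ε))))
      ((∑ i : Fin m, c i * Real.exp (-‖x - μ i‖ ^ 2 / (2 * a i * ε)))⁻¹ •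
        ∑ i : Fin m, ((c i * Real.exp (-‖x - μ i‖ ^ 2 / (2 * a i * ε))) * (a i)⁻¹) •
          (x - μ i)) x := by
  have hWpos : 0 < ∑ i : Fin m, c i * Real.exp (-‖x - μ i‖ ^ 2 / (2 * a i * ε)) :=
    Finset.sum_pos (fun i _ => mul_pos (hc i) (Real.exp_pos _))
      (Finset.univ_nonempty_iff.2 ⟨⟨0, hm⟩⟩)
  have hfi : ∀ i : Fin m, HasFDerivAt
      (fun y : EuclideanSpace ℝ (Fin n) => -‖y - μ i‖ ^ 2 / (2 * a i * ε))
      ((-(2 * a i * ε))⁻¹ • (2 • (innerSL ℝ (x - μ i)))) x := by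
    intro i
    have h1 : HasFDerivAt (fun y : EuclideanSpace ℝ (Fin n) => ‖y - μ i‖ ^ 2)
        (2 • (innerSL ℝ (x - μ i))) x := by
      have := ((hasFDerivAt_id x).sub_const (μ i)).norm_sq
      simpa using this
    have h2 := h1.const_mul ((-(2 * a i * ε))⁻¹)
    have heq : (fun y : EuclideanSpace ℝ (Fin n) =>
        (-(2 * a i * ε))⁻¹ * ‖y - μ i‖ ^ 2) =
        fun y => -‖y - μ i‖ ^ 2 / (2 * a i * ε) := by
      funext y
      rw [div_eq_mul_inv, ← neg_inv]
      ring
    rwa [heq] at h2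
  have hWD : HasFDerivAt
      (fun y : EuclideanSpace ℝ (Fin n) =>
        ∑ i : Fin m, c i * Real.exp (-‖y - μ i‖ ^ 2 / (2 * a i * ε)))
      (∑ i : Fin m, c i • (Real.exp (-‖x - μ i‖ ^ 2 / (2 * a i * ε)) •
        ((-(2 * a i * ε))⁻¹ • (2 • (innerSL ℝ (x - μ i)))))) x :=
    HasFDerivAt.fun_sum fun i _ => ((hfi i).exp).const_mul (c i)
  have hSD := (hWD.log hWpos.ne').const_mul (-ε)
  rw [hasGradientAt_iff_hasFDerivAt]
  refine hSD.congr_fderiv ?_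
  ext v
  simp only [ContinuousLinearMap.smul_apply, ContinuousLinearMap.coe_sum',
    Finset.sum_apply, innerSL_apply_apply, smul_eq_mul, InnerProductSpace.toDual_apply_apply,
    real_inner_smul_left, sum_inner, Finset.mul_sum]
  refine Finset.sum_congr rfl fun i _ => ?_
  have h1 : a i ≠ 0 := (ha i).ne'
  have h2 : ε ≠ 0 := hε.ne'
  have h3 : (∑ i : Fin m, c i * Real.exp (-‖x - μ i‖ ^ 2 / (2 * a i * ε))) ≠ 0 :=
    hWpos.ne'
  field_simp
  ring

lemma aux_alg {n m : ℕ} (a : Fin m → ℝ) (ha : ∀ i, a i ≠ 0) (t : ℝ)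
    (w : Fin m → ℝ) (hw : (∑ i : Fin m, w i) ≠ 0)
    (μ : Fin m → EuclideanSpace ℝ (Fin n)) (x : EuclideanSpace ℝ (Fin n)) :
    x - t • ((∑ i : Fin m, w i)⁻¹ • ∑ i : Fin m, (w i * (a i)⁻¹) • (x - μ i))
      = (∑ i : Fin m, w i)⁻¹ •
          ∑ i : Fin m, w i • ((a i)⁻¹ • ((a i - t) • x + t • μ i)) := by
  have hx : x = (∑ i : Fin m, w i)⁻¹ • ((∑ i : Fin m, w i) • x) := by
    rw [smul_smul, inv_mul_cancel₀ hw, one_smul]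
  calc x - t • ((∑ i : Fin m, w i)⁻¹ • ∑ i : Fin m, (w i * (a i)⁻¹) • (x - μ i))
      = (∑ i : Fin m, w i)⁻¹ • ((∑ i : Fin m, w i) • x
          - t • ∑ i : Fin m, (w i * (a i)⁻¹) • (x - μ i)) := by
        rw [smul_sub, ← hx, smul_comm]
    _ = _ := by
        congr 1
        rw [Finset.sum_smul, Finset.smul_sum, ← Finset.sum_sub_distrib]
        refine Finset.sum_congr rfl fun i _ => ?_
        have h1 := ha i
        match_scalars <;> field_simp

/-- Explicit posterior mean for a Gaussian mixture prior:
`S_ε(x) = -ε ln(∑ i (σ_i²/(σ_i²+t))^{n/2} e^{-‖x-μ_i‖²/(2(σ_i²+t)ε)})` is differentiable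
and `x - t ∇S_ε(x)` equals the softmax-weighted average of `(σ_i² x + t μ_i)/(σ_i²+t)`. -/
theorem stmt12 (n m : ℕ) (hm : 0 < m) (σ : Fin m → ℝ) (hσ : ∀ i, 0 < σ i)
    (μ : Fin m → EuclideanSpace ℝ (Fin n)) (t ε : ℝ) (ht : 0 < t) (hε : 0 < ε)
    (S : EuclideanSpace ℝ (Fin n) → ℝ)
    (hS : ∀ x, S x = -ε * Real.log (∑ i : Fin m,
      ((σ i) ^ 2 / ((σ i) ^ 2 + t)) ^ ((n : ℝ) / 2) *
        Real.exp (-‖x - μ i‖ ^ 2 / (2 * ((σ i) ^ 2 + t) * ε)))) :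
    Differentiable ℝ S ∧
    ∀ x : EuclideanSpace ℝ (Fin n),
      x - t • gradient S x
        = (∑ i : Fin m, ((σ i) ^ 2 / ((σ i) ^ 2 + t)) ^ ((n : ℝ) / 2) *
              Real.exp (-‖x - μ i‖ ^ 2 / (2 * ((σ i) ^ 2 + t) * ε)))⁻¹ •
            ∑ i : Fin m,
              (((σ i) ^ 2 / ((σ i) ^ 2 + t)) ^ ((n : ℝ) / 2) *
                  Real.exp (-‖x - μ i‖ ^ 2 / (2 * ((σ i) ^ 2 + t) * ε))) •
                (((σ i) ^ 2 + t)⁻¹ • ((σ i) ^ 2 • x + t • μ i)) := by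

  have hSfun : S = fun x => -ε * Real.log (∑ i : Fin m,
      ((σ i) ^ 2 / ((σ i) ^ 2 + t)) ^ ((n : ℝ) / 2) *
        Real.exp (-‖x - μ i‖ ^ 2 / (2 * ((σ i) ^ 2 + t) * ε))) := funext hS
  have hai : ∀ i : Fin m, 0 < (σ i) ^ 2 + t := fun i => by positivity
  have hci : ∀ i : Fin m, 0 < ((σ i) ^ 2 / ((σ i) ^ 2 + t)) ^ ((n : ℝ) / 2) :=
    fun i => Real.rpow_pos_of_pos (div_pos (pow_pos (hσ i) 2) (hai i)) _
  have key := fun x => aux_grad (n := n) hm (fun i => (σ i) ^ 2 + t)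
    (fun i => ((σ i) ^ 2 / ((σ i) ^ 2 + t)) ^ ((n : ℝ) / 2)) hai hci ε hε μ x
  rw [hSfun]
  constructor
  · exact fun x => (key x).hasFDerivAt.differentiableAt
  · intro x
    have hWpos : 0 < ∑ i : Fin m, ((σ i) ^ 2 / ((σ i) ^ 2 + t)) ^ ((n : ℝ) / 2) *
        Real.exp (-‖x - μ i‖ ^ 2 / (2 * ((σ i) ^ 2 + t) * ε)) :=
      Finset.sum_pos (fun i _ => mul_pos (hci i) (Real.exp_pos _))
        (Finset.univ_nonempty_iff.2 ⟨⟨0, hm⟩⟩)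
    rw [(key x).gradient]
    have := aux_alg (n := n) (fun i => (σ i) ^ 2 + t) (fun i => (hai i).ne') t
      (fun i => ((σ i) ^ 2 / ((σ i) ^ 2 + t)) ^ ((n : ℝ) / 2) *
        Real.exp (-‖x - μ i‖ ^ 2 / (2 * ((σ i) ^ 2 + t) * ε))) hWpos.ne' μ x
    simpa [add_sub_cancel_right] using this
end
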